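/- A connected finite simple graph G with n vertices and m edges that contains no even cycle satisfies n - 1 \le m \le n + \lfloor (n-1)/2 \rfloor - 1 (equivalently m \le \lfloor 3(n-1)/2 \rfloor). -/

import Mathlib

open Polynomial

/-- Number of matchings with exactly `k` edges in `G`. -/
noncomputable def matchingCount {V : Type*} [Fintype V] (G : SimpleGraph V) (k : ℕ) : ℕ :=
  Nat.card {s : Finset (Sym2 V) // s.card = k ∧ (∀ e ∈ s, e ∈ G.edgeSet) ∧
    ∀ e ∈ s, ∀ f ∈ s, e ≠ f → ∀ x : V, x ∈ e → x ∉ f}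

/-- The matching polynomial `m(G,x) = ∑ (-1)^k m_k(G) x^(n-2k)`. -/
noncomputable def matchPoly {V : Type*} [Fintype V] (G : SimpleGraph V) : Polynomial ℝ :=
  ∑ k ∈ Finset.range (Fintype.card V + 1),
    Polynomial.C ((-1 : ℝ) ^ k * (matchingCount G k : ℝ)) *
      Polynomial.X ^ (Fintype.card V - 2 * k)

/-- The maximum real root `t(G)` of the matching polynomial. -/
noncomputable def maxRoot {V : Type*} [Fintype V] (G : SimpleGraph V) : ℝ :=
  sSup {x : ℝ | (matchPoly G).eval x = 0}

section OddCycleAux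

open SimpleGraph

variable {V : Type*}

private lemma phi_surj {G H : SimpleGraph V} (h : H ≤ G) :
    Function.Surjective (ConnectedComponent.map (Hom.ofLE h)) := by
  intro c
  induction c using ConnectedComponent.ind with
  | _ v =>
    exact ⟨H.connectedComponentMk v, by
      simp [ConnectedComponent.map_mk, Hom.ofLE_apply]⟩

private lemma reach_cases {G : SimpleGraph V} {x y : V} {v w : V} (p : G.Walk v w) :
    (G.deleteEdges {s(x, y)}).Reachable v w ∨
      ((G.deleteEdges {s(x, y)}).Reachable v x ∧ (G.deleteEdges {s(x, y)}).Reachable y w) ∨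
      ((G.deleteEdges {s(x, y)}).Reachable v y ∧ (G.deleteEdges {s(x, y)}).Reachable x w) := by
  induction p with
  | nil => exact Or.inl (Reachable.refl _)
  | @cons u a w h p ih =>
    by_cases hmem : s(u, a) = s(x, y)
    · rw [Sym2.eq_iff] at hmem
      rcases hmem with ⟨rfl, rfl⟩ | ⟨rfl, rfl⟩
      · rcases ih with h1 | ⟨h1, h2⟩ | ⟨h1, h2⟩
        · exact Or.inr (Or.inl ⟨Reachable.refl _, h1⟩)
        · exact Or.inl (h1.symm.trans h2)
        · exact Or.inl h2
      · rcases ih with h1 | ⟨h1, h2⟩ | ⟨h1, h2⟩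
        · exact Or.inr (Or.inr ⟨Reachable.refl _, h1⟩)
        · exact Or.inl h2
        · exact Or.inl (h1.symm.trans h2)
    · have hadj : (G.deleteEdges {s(x, y)}).Adj u a := by
        rw [deleteEdges_adj]
        exact ⟨h, by simpa using hmem⟩
      rcases ih with h1 | ⟨h1, h2⟩ | ⟨h1, h2⟩
      · exact Or.inl (hadj.reachable.trans h1)
      · exact Or.inr (Or.inl ⟨hadj.reachable.trans h1, h2⟩)
      · exact Or.inr (Or.inr ⟨hadj.reachable.trans h1, h2⟩)

private lemma card_cc_del_one_le [Fintype V] (G : SimpleGraph V) (x y : V) :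
    Nat.card (G.deleteEdges {s(x, y)}).ConnectedComponent ≤
      Nat.card G.ConnectedComponent + 1 := by
  classical
  set G' := G.deleteEdges {s(x, y)} with hG'
  let φ : G'.ConnectedComponent → G.ConnectedComponent :=
    ConnectedComponent.map (Hom.ofLE (deleteEdges_le _))
  have hφmk : ∀ v : V, φ (G'.connectedComponentMk v) = G.connectedComponentMk v := fun v => by
    simp [φ, ConnectedComponent.map_mk, Hom.ofLE_apply]
  let f : G'.ConnectedComponent → G.ConnectedComponent ⊕ Unit := fun c =>
    if c = G'.connectedComponentMk y ∧ ¬ G'.Reachable x y then Sum.inr () else Sum.inl (φ c)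
  have hf : Function.Injective f := by
    intro c1 c2 hf
    by_cases h1 : c1 = G'.connectedComponentMk y ∧ ¬ G'.Reachable x y <;>
      by_cases h2 : c2 = G'.connectedComponentMk y ∧ ¬ G'.Reachable x y
    · exact h1.1.trans h2.1.symm
    · simp only [f, if_pos h1, if_neg h2] at hf; exact absurd hf (by simp)
    · simp only [f, if_neg h1, if_pos h2] at hf; exact absurd hf (by simp)
    · simp only [f, if_neg h1, if_neg h2, Sum.inl.injEq] at hf
      obtain ⟨v, rfl⟩ := c1.exists_rep
      obtain ⟨w, rfl⟩ := c2.exists_rep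
      change φ (G'.connectedComponentMk v) = φ (G'.connectedComponentMk w) at hf
      rw [hφmk, hφmk, ConnectedComponent.eq] at hf
      obtain ⟨q⟩ := hf
      rcases reach_cases (x := x) (y := y) q with hw | ⟨ha, hb⟩ | ⟨ha, hb⟩
      · exact ConnectedComponent.sound hw
      · by_cases hxy : G'.Reachable x y
        · exact ConnectedComponent.sound ((ha.trans hxy).trans hb)
        · exact absurd ⟨(ConnectedComponent.sound hb.symm).symm ▸ rfl, hxy⟩ h2
      · by_cases hxy : G'.Reachable x y
        · exact ConnectedComponent.sound ((ha.trans hxy.symm).trans hb)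
        · exact absurd ⟨ConnectedComponent.sound ha, hxy⟩ h1
  calc Nat.card G'.ConnectedComponent ≤ Nat.card (G.ConnectedComponent ⊕ Unit) :=
        Nat.card_le_card_of_injective f hf
    _ = Nat.card G.ConnectedComponent + 1 := by simp

private lemma card_cc_bot [Fintype V] :
    Nat.card (⊥ : SimpleGraph V).ConnectedComponent = Fintype.card V := by
  rw [← Nat.card_eq_fintype_card]
  refine (Nat.card_eq_of_bijective (⊥ : SimpleGraph V).connectedComponentMk ⟨?_, ?_⟩).symm
  · intro v w h
    rw [ConnectedComponent.eq] at h
    obtain ⟨p⟩ := h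
    cases p with
    | nil => rfl
    | cons h _ => exact absurd h (by simp)
  · exact fun c => c.exists_rep

private lemma lower_aux [Fintype V] : ∀ (m : ℕ) (G : SimpleGraph V), G.edgeSet.ncard = m →
    Fintype.card V ≤ m + Nat.card G.ConnectedComponent := by
  intro m
  induction m using Nat.strong_induction_on with
  | _ m ih =>
    intro G hm
    classical
    rcases Set.eq_empty_or_nonempty G.edgeSet with he | ⟨e, he⟩
    · rw [edgeSet_eq_empty] at he
      subst he
      rw [card_cc_bot]
      omega
    · induction e using Sym2.ind with
    | _ x y =>
      have hmpos : 0 < m := by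
        rw [← hm]
        exact (Set.ncard_pos (Set.toFinite _)).mpr ⟨_, he⟩
      have hm' : (G.deleteEdges {s(x, y)}).edgeSet.ncard = m - 1 := by
        rw [edgeSet_deleteEdges, ← Set.singleton_eq_singleton_iff.mpr rfl] at *
        rw [show ({s(x,y)} : Set (Sym2 V)) = {s(x,y)} from rfl]
        rw [Set.ncard_diff_singleton_of_mem he, hm]
      have := ih (m - 1) (by omega) _ hm'
      have hk := card_cc_del_one_le G x y
      omega


private lemma isCycle_append_of_paths {G : SimpleGraph V} {a b : V} (hab : a ≠ b)
    {p : G.Walk a b} {q : G.Walk b a} (hp : p.IsPath) (hq : q.IsPath)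
    (hedge : p.edges.Disjoint q.edges)
    (hsupp : ∀ z ∈ p.support, z ∈ q.support → z = a ∨ z = b) :
    (p.append q).IsCycle := by
  have hanp : a ∉ p.support.tail := by
    have := hp.support_nodup
    rw [p.support_eq_cons] at this
    exact (List.nodup_cons.mp this).1
  have hbnq : b ∉ q.support.tail := by
    have := hq.support_nodup
    rw [q.support_eq_cons] at this
    exact (List.nodup_cons.mp this).1
  rw [Walk.isCycle_def]
  refine ⟨?_, ?_, ?_⟩
  · rw [Walk.isTrail_def, Walk.edges_append]
    exact List.Nodup.append hp.isTrail.edges_nodup hq.isTrail.edges_nodup hedge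
  · intro h
    have := congrArg Walk.length h
    rw [Walk.length_append] at this
    simp only [Walk.length_nil] at this
    have hp0 : p.length = 0 := by omega
    exact hab (Walk.eq_of_length_eq_zero hp0)
  · rw [Walk.tail_support_append, List.nodup_append]
    refine ⟨hp.support_nodup.tail, hq.support_nodup.tail, ?_⟩
    rintro z hz1 _ hz2 rfl
    rcases hsupp z (List.mem_of_mem_tail hz1) (List.mem_of_mem_tail hz2) with rfl | rfl
    · exact hanp hz1
    · exact hbnq hz2

private lemma mem_support_closed_iff {G : SimpleGraph V} {u z : V} (c : G.Walk u u)
    (hnil : ¬ c.Nil) : z ∈ c.support ↔ z ∈ c.support.tail := by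
  cases c with
  | nil => simp at hnil
  | cons h q =>
    simp only [Walk.support_cons, List.tail_cons, List.mem_cons]
    constructor
    · rintro (rfl | hz)
      · exact q.end_mem_support
      · exact hz
    · exact fun h => Or.inr h

private lemma theta {G : SimpleGraph V}
    (hodd : ∀ (u : V) (c : G.Walk u u), c.IsCycle → ¬ Even c.length)
    {u : V} {c : G.Walk u u} (hc : c.IsCycle) {x y : V}
    (hx : x ∈ c.support) (hy : y ∈ c.support) (hxy : x ≠ y) :
    ¬ (G.deleteEdges {e | e ∈ c.edges}).Reachable x y := by
  classical
  intro hreach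
  set G' := G.deleteEdges {e | e ∈ c.edges} with hG'
  have hex : ∃ n, ∃ a b : V, a ∈ c.support ∧ b ∈ c.support ∧ a ≠ b ∧
      ∃ p : G'.Walk a b, p.IsPath ∧ p.length = n := by
    obtain ⟨w⟩ := hreach
    exact ⟨w.toPath.1.length, x, y, hx, hy, hxy, w.toPath.1, w.toPath.2, rfl⟩
  obtain ⟨a, b, ha, hb, hab, p, hp, hlen⟩ := Nat.find_spec hex
  have hint : ∀ z ∈ p.support, z ∈ c.support → z = a ∨ z = b := by
    intro z hz hzc
    by_contra hcon
    push_neg at hcon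
    obtain ⟨hza, hzb⟩ := hcon
    have hdrop : ¬ (p.dropUntil z hz).length = 0 := fun h0 => hzb (Walk.eq_of_length_eq_zero h0)
    have hsplit : (p.takeUntil z hz).length + (p.dropUntil z hz).length = p.length := by
      rw [← Walk.length_append, Walk.take_spec]
    have hlt : (p.takeUntil z hz).length < Nat.find hex := by omega
    exact Nat.find_min hex hlt ⟨a, z, ha, hzc, fun h => hza h.symm, p.takeUntil z hz,
      hp.takeUntil hz, rfl⟩
  have hpedge : ∀ e ∈ p.edges, e ∉ c.edges := by
    intro e hep
    have h2 := p.edges_subset_edgeSet hep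
    rw [hG', edgeSet_deleteEdges] at h2
    exact h2.2
  -- rotate the cycle to start at a
  set c₁ := c.rotate a ha with hc₁def
  have hc₁ : c₁.IsCycle := hc.rotate ha
  have htailrot : c₁.support.tail ~r c.support.tail := Walk.support_rotate c a ha
  have hmem₁ : ∀ z : V, z ∈ c₁.support ↔ z ∈ c.support := by
    intro z
    rw [mem_support_closed_iff c₁ hc₁.not_nil, mem_support_closed_iff c hc.not_nil,
      htailrot.mem_iff]
  have hb₁ : b ∈ c₁.support := (hmem₁ b).mpr hb
  have hedges₁ : ∀ e : Sym2 V, e ∈ c₁.edges ↔ e ∈ c.edges := fun e =>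
    (Walk.rotate_edges c a ha).mem_iff
  have hlen₁ : c₁.length = c.length := by
    have h3 := (Walk.rotate_edges c a ha).perm.length_eq
    rwa [Walk.length_edges, Walk.length_edges] at h3
  set q₁ := c₁.takeUntil b hb₁ with hq₁def
  set q₂ := c₁.dropUntil b hb₁ with hq₂def
  have hspec : q₁.append q₂ = c₁ := Walk.take_spec c₁ hb₁
  have hsupp : c₁.support.tail = q₁.support.tail ++ q₂.support.tail := by
    have h1 : c₁.support = a :: (q₁.support.tail ++ q₂.support.tail) := by
      conv_lhs => rw [← hspec]
      rw [Walk.support_append]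
      conv_lhs => rw [q₁.support_eq_cons]
      rfl
    have h2 : c₁.support = a :: c₁.support.tail := c₁.support_eq_cons
    rw [h2] at h1
    injection h1
  have ht : c₁.support.tail.Nodup := ((Walk.isCycle_def _).mp hc₁).2.2
  rw [hsupp, List.nodup_append] at ht
  obtain ⟨hn₁, hn₂, hdisj⟩ := ht
  have hbq₁ : b ∈ q₁.support.tail := Walk.end_mem_tail_support_of_ne hab q₁
  have haq₂ : a ∈ q₂.support.tail := Walk.end_mem_tail_support_of_ne (Ne.symm hab) q₂
  have hq₁path : q₁.IsPath := by
    rw [Walk.isPath_def, q₁.support_eq_cons, List.nodup_cons]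
    exact ⟨fun h => hdisj _ h _ haq₂ rfl, hn₁⟩
  have hq₂path : q₂.IsPath := by
    rw [Walk.isPath_def, q₂.support_eq_cons, List.nodup_cons]
    exact ⟨fun h => hdisj _ hbq₁ _ h rfl, hn₂⟩
  have hq₁sub : ∀ z ∈ q₁.support, z ∈ c.support := fun z hz =>
    (hmem₁ z).mp (c₁.support_takeUntil_subset hb₁ hz)
  have hq₂sub : ∀ z ∈ q₂.support, z ∈ c.support := fun z hz =>
    (hmem₁ z).mp (c₁.support_dropUntil_subset hb₁ hz)
  have hq₁edges : ∀ e ∈ q₁.edges, e ∈ c.edges := fun e hz =>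
    (hedges₁ e).mp (c₁.edges_takeUntil_subset hb₁ hz)
  have hq₂edges : ∀ e ∈ q₂.edges, e ∈ c.edges := fun e hz =>
    (hedges₁ e).mp (c₁.edges_dropUntil_subset hb₁ hz)
  -- transfer p to G
  set p' : G.Walk a b := p.mapLe (deleteEdges_le _) with hp'def
  have hp' : p'.IsPath := hp.mapLe _
  have hid : ⇑(Hom.ofLE (deleteEdges_le (G := G) {e | e ∈ c.edges})) = id :=
    rfl
  have hp'supp : p'.support = p.support := by
    rw [hp'def, Walk.mapLe, Walk.support_map, hid, List.map_id]
  have hp'edges : p'.edges = p.edges := by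
    rw [hp'def, Walk.mapLe, Walk.edges_map, hid]
    simp [Sym2.map_id]
  have hp'len : p'.length = p.length := Walk.length_map _ _
  -- the two candidate cycles
  have hcyc₁ : (q₁.append p'.reverse).IsCycle := by
    refine isCycle_append_of_paths hab hq₁path hp'.reverse ?_ ?_
    · intro e he₁ he₂
      rw [Walk.edges_reverse, List.mem_reverse, hp'edges] at he₂
      exact hpedge e he₂ (hq₁edges e he₁)
    · intro z hz₁ hz₂
      rw [Walk.support_reverse, List.mem_reverse, hp'supp] at hz₂
      exact hint z hz₂ (hq₁sub z hz₁)
  have hcyc₂ : (p'.append q₂).IsCycle := by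
    refine isCycle_append_of_paths hab hp' hq₂path ?_ ?_
    · intro e he₁ he₂
      rw [hp'edges] at he₁
      exact hpedge e he₁ (hq₂edges e he₂)
    · intro z hz₁ hz₂
      rw [hp'supp] at hz₁
      exact hint z hz₁ (hq₂sub z hz₂)
  have hw₁ : (q₁.append p'.reverse).length = q₁.length + p.length := by
    rw [Walk.length_append, Walk.length_reverse, hp'len]
  have hw₂ : (p'.append q₂).length = p.length + q₂.length := by
    rw [Walk.length_append, hp'len]
  have hsum : q₁.length + q₂.length = c.length := by
    rw [← hlen₁, ← hspec, Walk.length_append]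
  have hoddc : ¬ Even c.length := hodd u c hc
  have h2 : ¬ Even (q₁.length + q₂.length) := hsum ▸ hoddc
  have hpar : Even (q₁.length + p.length) ∨ Even (p.length + q₂.length) := by
    rw [Nat.even_iff, Nat.even_iff]
    rw [Nat.even_iff] at h2
    omega
  rcases hpar with hE | hE
  · exact hodd a _ hcyc₁ (hw₁ ▸ hE)
  · exact hodd a _ hcyc₂ (hw₂ ▸ hE)
private lemma upper_aux [Fintype V] : ∀ (m : ℕ) (G : SimpleGraph V), G.edgeSet.ncard = m →
    (∀ (u : V) (c : G.Walk u u), c.IsCycle → ¬ Even c.length) →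
    2 * m + 3 * Nat.card G.ConnectedComponent ≤ 3 * Fintype.card V := by
  intro m
  induction m using Nat.strong_induction_on with
  | _ m ih =>
    intro G hm hodd
    classical
    haveI : Fintype G.ConnectedComponent := Fintype.ofFinite _
    rcases Set.eq_empty_or_nonempty G.edgeSet with he | ⟨e, he⟩
    · rw [edgeSet_eq_empty] at he
      subst he
      simp only [Set.ncard_empty, edgeSet_bot] at hm
      rw [card_cc_bot]
      omega
    · induction e using Sym2.ind with
    | _ x y =>
      have hadj : G.Adj x y := he
      have hmpos : 0 < m := by
        rw [← hm]
        exact (Set.ncard_pos (Set.toFinite _)).mpr ⟨_, he⟩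
      by_cases hbr : G.IsBridge s(x, y)
      · -- bridge case
        set G' := G.deleteEdges {s(x, y)} with hG'
        haveI : Fintype G'.ConnectedComponent := Fintype.ofFinite _
        have hm' : G'.edgeSet.ncard = m - 1 := by
          rw [hG', edgeSet_deleteEdges, Set.ncard_diff_singleton_of_mem he, hm]
        have hodd' : ∀ (u : V) (cy : G'.Walk u u), cy.IsCycle → ¬ Even cy.length := by
          intro u cy hcy hev
          exact hodd u (cy.mapLe (deleteEdges_le _)) (hcy.mapLe _)
            (by rwa [Walk.mapLe, Walk.length_map])
        have hnr : ¬ G'.Reachable x y := by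
          rw [isBridge_iff] at hbr
          exact hbr
        have hklt : Nat.card G.ConnectedComponent < Nat.card G'.ConnectedComponent := by
          rw [Nat.card_eq_fintype_card, Nat.card_eq_fintype_card]
          refine Fintype.card_lt_of_surjective_not_injective _
            (phi_surj (deleteEdges_le _)) ?_
          intro hinj
          have h1 : ConnectedComponent.map (Hom.ofLE (deleteEdges_le _))
                (G'.connectedComponentMk x) =
              ConnectedComponent.map (Hom.ofLE (deleteEdges_le _))
                (G'.connectedComponentMk y) := by
            change G.connectedComponentMk x = G.connectedComponentMk y
            exact ConnectedComponent.sound hadj.reachable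
          exact hnr (ConnectedComponent.eq.mp (hinj h1))
        have := ih (m - 1) (by omega) G' hm' hodd'
        omega
      · -- non-bridge: there is a cycle through s(x,y)
        rw [isBridge_iff_adj_and_forall_cycle_notMem he] at hbr
        have hbr' := hbr
        push_neg at hbr'
        obtain ⟨u, cw, hcyc, _⟩ := hbr'
        set s : Set (Sym2 V) := {e | e ∈ cw.edges} with hs
        set G' := G.deleteEdges s with hG'
        haveI : Fintype G'.ConnectedComponent := Fintype.ofFinite _
        set l := cw.length with hl
        have hsub : s ⊆ G.edgeSet := fun e hecw => cw.edges_subset_edgeSet hecw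
        have hns : s.ncard = l := by
          rw [hs, ← List.coe_toFinset, Set.ncard_coe_finset,
            List.toFinset_card_of_nodup hcyc.isTrail.edges_nodup, Walk.length_edges]
        have hm' : G'.edgeSet.ncard = m - l := by
          rw [hG', edgeSet_deleteEdges, Set.ncard_diff hsub (Set.toFinite _), hm, hns]
        have hml : l ≤ m := by
          rw [← hm, ← hns]
          exact Set.ncard_le_ncard hsub (Set.toFinite _)
        have hl3 : 3 ≤ l := hcyc.three_le_length
        have hodd' : ∀ (u : V) (cy : G'.Walk u u), cy.IsCycle → ¬ Even cy.length := by
          intro u cy hcy hev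
          exact hodd u (cy.mapLe (deleteEdges_le _)) (hcy.mapLe _)
            (by rwa [Walk.mapLe, Walk.length_map])
        -- component counting
        set φ : G'.ConnectedComponent → G.ConnectedComponent :=
          ConnectedComponent.map (Hom.ofLE (deleteEdges_le _)) with hφ
        have hφsurj : Function.Surjective φ := phi_surj _
        have hφmk : ∀ v : V, φ (G'.connectedComponentMk v) = G.connectedComponentMk v :=
          fun v => by simp [hφ, ConnectedComponent.map_mk, Hom.ofLE_apply]
        set c₀ := G.connectedComponentMk u with hc₀
        set S₂ : Finset G'.ConnectedComponent :=
          cw.support.tail.toFinset.image G'.connectedComponentMk with hS₂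
        have htail_nodup : cw.support.tail.Nodup := ((Walk.isCycle_def _).mp hcyc).2.2
        have hS₂card : S₂.card = l := by
          rw [hS₂, Finset.card_image_of_injOn, List.toFinset_card_of_nodup htail_nodup]
          · rw [List.length_tail, Walk.length_support]
            omega
          · intro a haT b hbT hmk
            by_contra hne
            simp only [Finset.mem_coe, List.mem_toFinset] at haT hbT
            exact theta hodd hcyc (List.mem_of_mem_tail haT) (List.mem_of_mem_tail hbT) hne
              (ConnectedComponent.eq.mp hmk)
        set S₁ : Finset G'.ConnectedComponent :=
          (Finset.univ.erase c₀).image (Function.surjInv hφsurj) with hS₁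
        have hS₁card : S₁.card = Fintype.card G.ConnectedComponent - 1 := by
          rw [hS₁, Finset.card_image_of_injective _ (Function.injective_surjInv hφsurj)]
          simp [Finset.card_erase_of_mem]
        have hdisj : Disjoint S₁ S₂ := by
          rw [Finset.disjoint_left]
          rintro z hz1 hz2
          rw [hS₁, Finset.mem_image] at hz1
          obtain ⟨d, hd, rfl⟩ := hz1
          have hd' : d ≠ c₀ := (Finset.mem_erase.mp hd).1
          rw [hS₂, Finset.mem_image] at hz2
          obtain ⟨v, hv, hveq⟩ := hz2
          rw [List.mem_toFinset] at hv
          have hvsupp : v ∈ cw.support := List.mem_of_mem_tail hv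
          have h1 : φ (Function.surjInv hφsurj d) = d := Function.surjInv_eq hφsurj d
          rw [← hveq, hφmk] at h1
          have h2 : G.connectedComponentMk v = c₀ :=
            (ConnectedComponent.sound ⟨cw.takeUntil v hvsupp⟩).symm
          exact hd' (h1 ▸ h2)
        have hcount : Fintype.card G.ConnectedComponent - 1 + l ≤
            Fintype.card G'.ConnectedComponent := by
          have := Finset.card_le_univ (S₁ ∪ S₂)
          rw [Finset.card_union_of_disjoint hdisj, hS₁card, hS₂card] at this
          exact this
        have hkpos : 0 < Fintype.card G.ConnectedComponent := Fintype.card_pos_iff.mpr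
          ⟨c₀⟩
        have := ih (m - l) (by omega) G' hm' hodd'
        rw [Nat.card_eq_fintype_card] at this ⊢
        omega

end OddCycleAux

/-- A connected graph with no even cycle on `n` vertices and `m` edges satisfies
`n - 1 ≤ m ≤ n + ⌊(n-1)/2⌋ - 1`. -/
theorem odd_cycle_graph_size_bounds {V : Type*} [Fintype V] (G : SimpleGraph V)
    (hconn : G.Connected)
    (hodd : ∀ (u : V) (c : G.Walk u u), c.IsCycle → ¬ Even c.length) :
    Fintype.card V - 1 ≤ G.edgeSet.ncard ∧
      G.edgeSet.ncard ≤ Fintype.card V + (Fintype.card V - 1) / 2 - 1 := by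
  classical
  have hk1 : Nat.card G.ConnectedComponent = 1 := by
    have hsub : Subsingleton G.ConnectedComponent := by
      constructor
      intro c d
      obtain ⟨v, rfl⟩ := c.exists_rep
      obtain ⟨w, rfl⟩ := d.exists_rep
      exact SimpleGraph.ConnectedComponent.sound (hconn.preconnected v w)
    have hne : Nonempty G.ConnectedComponent := ⟨G.connectedComponentMk hconn.nonempty.some⟩
    exact Nat.card_eq_one_iff_unique.mpr ⟨hsub, hne⟩
  have h1 := lower_aux G.edgeSet.ncard G rfl
  have h2 := upper_aux G.edgeSet.ncard G rfl hodd
  rw [hk1] at h1 h2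
  omega
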